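/- Let H be a K×M complex matrix with rank K, α ≥ 0, σ > 0, H_α = H†(αI + HH†)^{-1}, H_MMSE = H_{σ²}, and d any real number. Then the K×K matrix d²I_K − 2d·HH_α + HH_α · H_MMSE⁺ · H_α is positive definite, where H_MMSE⁺ denotes the Moore–Penrose pseudo-inverse; in particular there exists a matrix T with T†T = d²I_K − 2d·HH_α + HH_α H_MMSE⁺ H_α. -/

import Mathlib

open Matrix ComplexOrder

/-- Moore–Penrose pseudo-inverse of a full-column-rank matrix. -/
noncomputable def pinv {M K : ℕ} (A : Matrix (Fin M) (Fin K) ℂ) : Matrix (Fin K) (Fin M) ℂ :=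
  (Aᴴ * A)⁻¹ * Aᴴ

lemma aux_isUnit_of_rank {K : ℕ} (B : Matrix (Fin K) (Fin K) ℂ) (h : B.rank = K) :
    IsUnit B := by
  rw [← Matrix.mulVec_surjective_iff_isUnit]
  have htop : LinearMap.range B.mulVecLin = ⊤ := by
    apply Submodule.eq_top_of_finrank_eq
    rw [show Module.finrank ℂ (LinearMap.range B.mulVecLin) = B.rank from rfl, h]
    simp
  intro y
  obtain ⟨x, hx⟩ := LinearMap.range_eq_top.mp htop y
  exact ⟨x, hx⟩

lemma aux_posDef_conj {K : ℕ} {B Y : Matrix (Fin K) (Fin K) ℂ} (hB : B.PosDef)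
    (hY : IsUnit Y) : (Yᴴ * B * Y).PosDef := by
  refine Matrix.posDef_iff_dotProduct_mulVec.mpr ⟨Matrix.isHermitian_conjTranspose_mul_mul Y hB.1, fun x hx => ?_⟩
  have hinj : Function.Injective Y.mulVec := Matrix.mulVec_injective_iff_isUnit.mpr hY
  have hYx : Y *ᵥ x ≠ 0 := fun h0 => hx (hinj (by simpa using h0))
  have : star x ⬝ᵥ (Yᴴ * B * Y) *ᵥ x = star (Y *ᵥ x) ⬝ᵥ B *ᵥ (Y *ᵥ x) := by
    rw [← mulVec_mulVec, ← mulVec_mulVec, dotProduct_mulVec, vecMul_conjTranspose, star_star]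
  rw [this]
  exact hB.dotProduct_mulVec_pos hYx

theorem stmt5 (K M : ℕ) (H : Matrix (Fin K) (Fin M) ℂ) (hrank : H.rank = K)
    (α : ℝ) (hα : 0 ≤ α) (σ : ℝ) (hσ : 0 < σ) (d : ℝ)
    (Hα : Matrix (Fin M) (Fin K) ℂ)
    (hHα : Hα = Hᴴ * ((α : ℂ) • (1 : Matrix (Fin K) (Fin K) ℂ) + H * Hᴴ)⁻¹)
    (HM : Matrix (Fin M) (Fin K) ℂ)
    (hHM : HM = Hᴴ * (((σ ^ 2 : ℝ) : ℂ) • (1 : Matrix (Fin K) (Fin K) ℂ) + H * Hᴴ)⁻¹)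
    (A : Matrix (Fin K) (Fin K) ℂ)
    (hA : A = ((d : ℂ) ^ 2) • (1 : Matrix (Fin K) (Fin K) ℂ)
        - (2 * (d : ℂ)) • (H * Hα) + H * Hα * pinv HM * Hα) :
    A.PosDef ∧ ∃ T : Matrix (Fin K) (Fin K) ℂ, Tᴴ * T = A := by
  classical
  set B : Matrix (Fin K) (Fin K) ℂ := H * Hᴴ with hBdef
  -- B is a unit
  have hBrank : B.rank = K := by rw [hBdef, Matrix.rank_self_mul_conjTranspose, hrank]
  have hBu : IsUnit B := aux_isUnit_of_rank B hBrank
  -- B is positive definite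
  have hBps : B.PosSemidef := Matrix.posSemidef_self_mul_conjTranspose H
  have hB : B.PosDef := by
    refine Matrix.posDef_iff_dotProduct_mulVec.mpr ⟨hBps.1, fun x hx => lt_of_le_of_ne (hBps.dotProduct_mulVec_nonneg x) (Ne.symm fun h0 => hx ?_)⟩
    have hBx : B *ᵥ x = 0 := (hBps.dotProduct_mulVec_zero_iff x).mp h0
    have hinj : Function.Injective B.mulVec := Matrix.mulVec_injective_iff_isUnit.mpr hBu
    exact hinj (by simpa using hBx)
  -- scaled identities are PosSemidef
  have hsmul_ps : ∀ c : ℝ, 0 ≤ c →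
      ((c : ℂ) • (1 : Matrix (Fin K) (Fin K) ℂ)).PosSemidef := by
    intro c hc
    rw [Matrix.smul_one_eq_diagonal]
    exact Matrix.posSemidef_diagonal_iff.mpr fun i => by
      simpa using Complex.zero_le_real.mpr hc
  set S : Matrix (Fin K) (Fin K) ℂ := (α : ℂ) • 1 + B with hSdef
  set Sσ : Matrix (Fin K) (Fin K) ℂ := ((σ ^ 2 : ℝ) : ℂ) • 1 + B with hSσdef
  have hS : S.PosDef := Matrix.PosDef.posSemidef_add (hsmul_ps α hα) hB
  have hSσ : Sσ.PosDef := Matrix.PosDef.posSemidef_add (hsmul_ps _ (sq_nonneg σ)) hB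
  have hSu : IsUnit S.det := hS.isUnit.map detMonoidHom
  have hSσu : IsUnit Sσ.det := hSσ.isUnit.map detMonoidHom
  have hBd : IsUnit B.det := hBu.map detMonoidHom
  -- Hermitian inverses
  have hSinvH : (S⁻¹)ᴴ = S⁻¹ := hS.isHermitian.inv.eq
  have hSσinvH : (Sσ⁻¹)ᴴ = Sσ⁻¹ := hSσ.isHermitian.inv.eq
  have hBH : Bᴴ = B := hB.isHermitian.eq
  -- commutation B * S⁻¹ = S⁻¹ * B
  have hBS : B * S = S * B := by
    simp only [hSdef, Matrix.mul_add, Matrix.add_mul, Matrix.mul_smul, Matrix.smul_mul,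
      Matrix.mul_one, Matrix.one_mul]
  have hcomm : B * S⁻¹ = S⁻¹ * B := by
    calc B * S⁻¹ = S⁻¹ * S * (B * S⁻¹) := by rw [Matrix.nonsing_inv_mul _ hSu, Matrix.one_mul]
    _ = S⁻¹ * (S * B) * S⁻¹ := by simp only [Matrix.mul_assoc]
    _ = S⁻¹ * (B * S) * S⁻¹ := by rw [hBS]
    _ = S⁻¹ * B * (S * S⁻¹) := by simp only [Matrix.mul_assoc]
    _ = S⁻¹ * B := by rw [Matrix.mul_nonsing_inv _ hSu, Matrix.mul_one]
  -- compute H * Hα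
  have hHHα : H * Hα = B * S⁻¹ := by rw [hHα, ← Matrix.mul_assoc, ← hBdef]
  -- compute HMᴴ
  have hHMH : HMᴴ = Sσ⁻¹ * H := by
    rw [hHM, Matrix.conjTranspose_mul, Matrix.conjTranspose_conjTranspose, hSσinvH]
  -- compute HMᴴ * HM
  have hGram : HMᴴ * HM = Sσ⁻¹ * B * Sσ⁻¹ := by
    rw [hHMH, hHM, hBdef]
    simp only [Matrix.mul_assoc]
  -- compute pinv HM
  have hpinv : pinv HM = Sσ * B⁻¹ * H := by
    rw [pinv, hGram, hHMH]
    have h1 : (Sσ⁻¹ * B * Sσ⁻¹)⁻¹ = Sσ * B⁻¹ * Sσ := by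
      rw [Matrix.mul_inv_rev, Matrix.mul_inv_rev,
        Matrix.nonsing_inv_nonsing_inv _ hSσu, ← Matrix.mul_assoc]
    rw [h1, Matrix.mul_assoc (Sσ * B⁻¹), ← Matrix.mul_assoc Sσ Sσ⁻¹ H,
      Matrix.mul_nonsing_inv _ hSσu, Matrix.one_mul]
  -- compute pinv HM * Hα
  have hpα : pinv HM * Hα = Sσ * S⁻¹ := by
    rw [hpinv, hHα]
    calc Sσ * B⁻¹ * H * (Hᴴ * S⁻¹) = Sσ * (B⁻¹ * (H * Hᴴ)) * S⁻¹ := by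
          simp only [Matrix.mul_assoc]
    _ = Sσ * (B⁻¹ * B) * S⁻¹ := by rw [← hBdef]
    _ = Sσ * S⁻¹ := by rw [Matrix.nonsing_inv_mul _ hBd, Matrix.mul_one]
  -- the key decomposition
  set X : Matrix (Fin K) (Fin K) ℂ := (d : ℂ) • 1 - B * S⁻¹ with hXdef
  have hXH : Xᴴ = X := by
    rw [hXdef, Matrix.conjTranspose_sub, Matrix.conjTranspose_smul, Matrix.conjTranspose_one,
      Matrix.conjTranspose_mul, hSinvH, hBH, hcomm]
    simp [Complex.star_def, Complex.conj_ofReal]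
  set P : Matrix (Fin K) (Fin K) ℂ := ((σ ^ 2 : ℝ) : ℂ) • (S⁻¹ᴴ * B * S⁻¹) with hPdef
  have hkey : A = Xᴴ * X + P := by
    rw [hA, hHHα, Matrix.mul_assoc (B * S⁻¹), hpα, hXH, hXdef, hPdef, hSinvH]
    have hexp : Sσ * S⁻¹ = ((σ ^ 2 : ℝ) : ℂ) • S⁻¹ + B * S⁻¹ := by
      rw [hSσdef, Matrix.add_mul, Matrix.smul_mul, Matrix.one_mul]
    rw [hexp]
    simp only [Matrix.mul_add, Matrix.add_mul, Matrix.sub_mul, Matrix.mul_sub,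
      Matrix.smul_mul, Matrix.mul_smul, Matrix.one_mul, Matrix.mul_one, smul_smul,
      Matrix.mul_assoc]
    rw [show B * (S⁻¹ * S⁻¹) = S⁻¹ * (B * S⁻¹) by
      rw [← Matrix.mul_assoc, hcomm, Matrix.mul_assoc, hcomm]]
    module
  -- P is positive definite
  have hσC : (σ : ℂ) ≠ 0 := by exact_mod_cast hσ.ne'
  have hYu : IsUnit ((σ : ℂ) • S⁻¹) := by
    rw [Matrix.isUnit_iff_isUnit_det, Matrix.det_smul]
    exact (IsUnit.pow _ (Ne.isUnit hσC)).mul (hS.inv.isUnit.map detMonoidHom)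
  have hP : P.PosDef := by
    have hYform : ((σ : ℂ) • S⁻¹)ᴴ * B * ((σ : ℂ) • S⁻¹) = P := by
      rw [hPdef, Matrix.conjTranspose_smul, Matrix.smul_mul, Matrix.mul_smul,
        Matrix.smul_mul, smul_smul]
      congr 1
      · rw [Complex.star_def, Complex.conj_ofReal]; push_cast; ring
    rw [← hYform]
    exact aux_posDef_conj hB hYu
  have hApd : A.PosDef := by
    rw [hkey]
    exact Matrix.PosDef.posSemidef_add (Matrix.posSemidef_conjTranspose_mul_self X) hP
  refine ⟨hApd, ?_⟩
  obtain ⟨T, hT⟩ : ∃ T : Matrix (Fin K) (Fin K) ℂ, A = Tᴴ * T := by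
    open scoped MatrixOrder in
    exact ⟨CFC.sqrt A, by rw [← star_eq_conjTranspose, (CFC.sqrt_nonneg A).star_eq, CFC.sqrt_mul_sqrt_self A hApd.posSemidef.nonneg]⟩
  exact ⟨T, hT.symm⟩
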